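/- The concatenation of an outer [[n, k, d]] stabilizer code with an inner [[n₀, 1, d₀]] stabilizer code (replacing each of the n outer qubits by a block of the inner code) yields an [[N, K, D]] code with N = n·n₀, K = k, and distance D ≥ d·d₀. -/

import Mathlib

open Finset

/-- A Pauli operator on `n` qubits (up to phase), in symplectic representation: a pair of
binary vectors `(x, z)` representing `X(x)Z(z)`. -/
abbrev PauliVec (n : ℕ) := (Fin n → ZMod 2) × (Fin n → ZMod 2)

/-- The symplectic form; two Pauli operators commute iff it vanishes. -/
def symplForm {n : ℕ} (P Q : PauliVec n) : ZMod 2 :=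
  ∑ i, (P.1 i * Q.2 i + P.2 i * Q.1 i)

/-- The weight of a Pauli operator: the number of qubits on which it acts nontrivially. -/
def pauliWeight {n : ℕ} (P : PauliVec n) : ℕ :=
  (univ.filter (fun i => P.1 i ≠ 0 ∨ P.2 i ≠ 0)).card

section basic
variable {m : ℕ}

lemma zmod2_eq_one {a : ZMod 2} (h : a ≠ 0) : a = 1 := by revert h; revert a; decide

lemma symplForm_comm (P Q : PauliVec m) : symplForm P Q = symplForm Q P :=
  Finset.sum_congr rfl fun i _ => by ring

lemma symplForm_self (P : PauliVec m) : symplForm P P = 0 := by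
  unfold symplForm
  rw [Finset.sum_congr rfl (fun i _ => ?_), Finset.sum_const_zero]
  rw [mul_comm]
  exact CharTwo.add_self_eq_zero _

lemma symplForm_add_left (P Q R : PauliVec m) :
    symplForm (P + Q) R = symplForm P R + symplForm Q R := by
  unfold symplForm
  rw [← Finset.sum_add_distrib]
  exact Finset.sum_congr rfl fun i _ => by
    simp only [Prod.fst_add, Prod.snd_add, Pi.add_apply]; ring

lemma symplForm_smul_left (c : ZMod 2) (P Q : PauliVec m) :
    symplForm (c • P) Q = c * symplForm P Q := by
  unfold symplForm
  rw [Finset.mul_sum]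
  exact Finset.sum_congr rfl fun i _ => by
    simp only [Prod.smul_fst, Prod.smul_snd, Pi.smul_apply, smul_eq_mul]; ring

lemma symplForm_add_right (P Q R : PauliVec m) :
    symplForm P (Q + R) = symplForm P Q + symplForm P R := by
  rw [symplForm_comm, symplForm_add_left, symplForm_comm Q P, symplForm_comm R P]

lemma symplForm_smul_right (c : ZMod 2) (P Q : PauliVec m) :
    symplForm P (c • Q) = c * symplForm P Q := by
  rw [symplForm_comm, symplForm_smul_left, symplForm_comm Q P]

lemma symplForm_neg_left (P Q : PauliVec m) : symplForm (-P) Q = - symplForm P Q := by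
  have := symplForm_smul_left (-1) P Q
  rw [neg_one_smul, neg_one_mul] at this; exact this

lemma symplForm_sub_left (P Q R : PauliVec m) :
    symplForm (P - Q) R = symplForm P R - symplForm Q R := by
  rw [sub_eq_add_neg, symplForm_add_left, symplForm_neg_left, sub_eq_add_neg]

lemma symplForm_zero_left (Q : PauliVec m) : symplForm 0 Q = 0 := by
  have := symplForm_smul_left 0 0 Q
  simpa using this

def sympB (m : ℕ) : LinearMap.BilinForm (ZMod 2) (PauliVec m) :=
  LinearMap.mk₂ (ZMod 2) symplForm symplForm_add_left symplForm_smul_left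
    symplForm_add_right symplForm_smul_right

@[simp] lemma sympB_apply (P Q : PauliVec m) : sympB m P Q = symplForm P Q := rfl

lemma sympB_isRefl : (sympB m).IsRefl := fun P Q h => by
  simpa [symplForm_comm Q P] using h

lemma sympB_nondeg : (sympB m).Nondegenerate := by
  refine (LinearMap.IsRefl.nondegenerate_iff_separatingLeft (B := sympB m) sympB_isRefl).mpr ?_
  intro v hv
  have h1 : ∀ i, v.1 i = 0 := by
    intro i
    have := hv (0, fun t => if t = i then 1 else 0)
    simpa [symplForm, mul_ite, Finset.sum_ite_eq'] using this
  have h2 : ∀ i, v.2 i = 0 := by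
    intro i
    have := hv ((fun t => if t = i then 1 else 0), 0)
    simpa [symplForm, mul_ite, Finset.sum_ite_eq'] using this
  obtain ⟨v1, v2⟩ := v
  simp only [Prod.mk_eq_zero]
  exact ⟨funext h1, funext h2⟩

lemma finrank_pauliVec : Module.finrank (ZMod 2) (PauliVec m) = 2 * m := by
  have : Module.finrank (ZMod 2) ((Fin m → ZMod 2) × (Fin m → ZMod 2)) = 2 * m := by
    rw [Module.finrank_prod, Module.finrank_fin_fun]; ring
  exact this
end basic


/-- An `[[n, k, d]]` stabilizer code: an isotropic subgroup `S` of the (phaseless) Pauli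
group of rank `n - k` such that every Pauli operator commuting with `S` but not in `S`
has weight at least `d`. -/
structure StabCode (n k d : ℕ) where
  S : Submodule (ZMod 2) (PauliVec n)
  isotropic : ∀ a ∈ S, ∀ b ∈ S, symplForm a b = 0
  rank_eq : Module.finrank (ZMod 2) S = n - k
  dist : ∀ P : PauliVec n, (∀ s ∈ S, symplForm P s = 0) → P ∉ S → d ≤ pauliWeight P

open Module in
lemma exists_logical_pair {n₀ d₀ : ℕ} (hn₀ : 1 ≤ n₀) (Qin : StabCode n₀ 1 d₀) :
    ∃ X Z : PauliVec n₀,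
      (∀ s ∈ Qin.S, symplForm s X = 0) ∧ (∀ s ∈ Qin.S, symplForm s Z = 0) ∧
      symplForm X Z = 1 ∧
      ∀ v : PauliVec n₀, (∀ s ∈ Qin.S, symplForm s v = 0) →
        symplForm v X = 0 → symplForm v Z = 0 → v ∈ Qin.S := by
  classical
  set B := sympB n₀ with hB
  set C := B.orthogonal Qin.S with hC
  have hrefl : B.IsRefl := sympB_isRefl
  have hnd : B.Nondegenerate := sympB_nondeg
  have hSC : Qin.S ≤ C := fun v hv s hs => Qin.isotropic s hs v hv
  have hfinS : finrank (ZMod 2) Qin.S = n₀ - 1 := Qin.rank_eq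
  have hfinC : finrank (ZMod 2) C = n₀ + 1 := by
    rw [hC, LinearMap.BilinForm.finrank_orthogonal hnd, finrank_pauliVec, hfinS]
    omega
  have hne : Qin.S ≠ C := by
    intro h
    rw [h, hfinC] at hfinS
    omega
  obtain ⟨X, hXC, hXS⟩ := SetLike.exists_of_lt (lt_of_le_of_ne hSC hne)
  have horth : B.orthogonal C = Qin.S := LinearMap.BilinForm.orthogonal_orthogonal hnd hrefl _
  have hXnots : ¬ (∀ c ∈ C, symplForm c X = 0) := by
    intro h
    exact hXS (horth ▸ (fun c hc => h c hc))
  push_neg at hXnots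
  obtain ⟨Z, hZC, hZX⟩ := hXnots
  have hZX1 : symplForm Z X = 1 := zmod2_eq_one hZX
  have hXZ1 : symplForm X Z = 1 := by rw [symplForm_comm]; exact hZX1
  -- linear independence of X, Z
  have hli : LinearIndependent (ZMod 2) ![X, Z] := by
    rw [LinearIndependent.pair_iff]
    intro s t hst
    have h1 : symplForm (s • X + t • Z) X = 0 := by rw [hst, symplForm_zero_left]
    have h2 : symplForm (s • X + t • Z) Z = 0 := by rw [hst, symplForm_zero_left]
    rw [symplForm_add_left, symplForm_smul_left, symplForm_smul_left, symplForm_self,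
      hZX1, mul_zero, mul_one, zero_add] at h1
    rw [symplForm_add_left, symplForm_smul_left, symplForm_smul_left, symplForm_self,
      hXZ1, mul_zero, mul_one, add_zero] at h2
    exact ⟨h2, h1⟩
  have hspanrank : finrank (ZMod 2) (Submodule.span (ZMod 2) ({X, Z} : Set (PauliVec n₀))) = 2 := by
    have : ({X, Z} : Set (PauliVec n₀)) = Set.range ![X, Z] := by
      simp [Matrix.range_cons, Matrix.range_empty, Set.pair_comm X Z]
    rw [this, finrank_span_eq_card hli]
    simp
  have hinf : Qin.S ⊓ Submodule.span (ZMod 2) ({X, Z} : Set (PauliVec n₀)) = ⊥ := by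
    rw [eq_bot_iff]
    rintro w ⟨hwS, hwT⟩
    obtain ⟨a, b, hab⟩ := Submodule.mem_span_pair.mp hwT
    have hwX : symplForm w X = 0 := hXC w hwS
    have hwZ : symplForm w Z = 0 := hZC w hwS
    rw [← hab, symplForm_add_left, symplForm_smul_left, symplForm_smul_left, symplForm_self,
      hZX1, mul_zero, mul_one, zero_add] at hwX
    rw [← hab, symplForm_add_left, symplForm_smul_left, symplForm_smul_left, symplForm_self,
      hXZ1, mul_zero, mul_one, add_zero] at hwZ
    rw [← hab, hwX, hwZ]
    simp
  have hsup : Qin.S ⊔ Submodule.span (ZMod 2) ({X, Z} : Set (PauliVec n₀)) = C := by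
    apply Submodule.eq_of_le_of_finrank_le
    · refine sup_le hSC (Submodule.span_le.mpr ?_)
      rintro w (rfl | rfl)
      · exact hXC
      · exact hZC
    · have h3 := Submodule.finrank_sup_add_finrank_inf_eq Qin.S
        (Submodule.span (ZMod 2) ({X, Z} : Set (PauliVec n₀)))
      rw [hinf, hspanrank, hfinS] at h3
      simp only [finrank_bot, add_zero] at h3
      rw [hfinC]
      omega
  refine ⟨X, Z, hXC, hZC, hXZ1, ?_⟩
  intro v hvS hvX hvZ
  have hvmem : v ∈ C := fun s hs => hvS s hs
  rw [← horth]
  intro c hcC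
  rw [← hsup] at hcC
  obtain ⟨s, hs, t, ht, rfl⟩ := Submodule.mem_sup.mp hcC
  obtain ⟨a, b, rfl⟩ := Submodule.mem_span_pair.mp ht
  show symplForm (s + (a • X + b • Z)) v = 0
  rw [symplForm_add_left, symplForm_add_left, symplForm_smul_left, symplForm_smul_left,
    hvS s hs, symplForm_comm X v, hvX, symplForm_comm Z v, hvZ]
  ring

section blocks
variable {n n₀ : ℕ}

def blk (P : PauliVec (n * n₀)) (i : Fin n) : PauliVec n₀ :=
  (fun j => P.1 (finProdFinEquiv (i, j)), fun j => P.2 (finProdFinEquiv (i, j)))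

def unblk (f : Fin n → PauliVec n₀) : PauliVec (n * n₀) :=
  (fun m => (f (finProdFinEquiv.symm m).1).1 (finProdFinEquiv.symm m).2,
   fun m => (f (finProdFinEquiv.symm m).1).2 (finProdFinEquiv.symm m).2)

@[simp] lemma blk_unblk (f : Fin n → PauliVec n₀) (i : Fin n) : blk (unblk f) i = f i := by
  unfold blk unblk
  simp only [Equiv.symm_apply_apply]

lemma unblk_blk (P : PauliVec (n * n₀)) : unblk (blk P) = P := by
  unfold blk unblk
  refine Prod.ext (funext fun m => ?_) (funext fun m => ?_) <;>
  · simp only [Prod.mk.eta, Equiv.apply_symm_apply]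

@[simp] lemma blk_add (P Q : PauliVec (n * n₀)) (i : Fin n) :
    blk (P + Q) i = blk P i + blk Q i := rfl

@[simp] lemma blk_smul (c : ZMod 2) (P : PauliVec (n * n₀)) (i : Fin n) :
    blk (c • P) i = c • blk P i := rfl

@[simp] lemma blk_zero (i : Fin n) : blk (0 : PauliVec (n * n₀)) i = 0 := rfl

@[simp] lemma blk_sub (P Q : PauliVec (n * n₀)) (i : Fin n) :
    blk (P - Q) i = blk P i - blk Q i := rfl

lemma symplForm_blocks (P Q : PauliVec (n * n₀)) :
    symplForm P Q = ∑ i, symplForm (blk P i) (blk Q i) := by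
  unfold symplForm
  rw [← Equiv.sum_comp finProdFinEquiv
    (fun t => P.1 t * Q.2 t + P.2 t * Q.1 t), Fintype.sum_prod_type]
  rfl

lemma pauliWeight_blocks (P : PauliVec (n * n₀)) :
    pauliWeight P = ∑ i, pauliWeight (blk P i) := by
  unfold pauliWeight
  classical
  rw [Finset.card_filter]
  rw [← Equiv.sum_comp finProdFinEquiv
    (fun t => if P.1 t ≠ 0 ∨ P.2 t ≠ 0 then 1 else 0), Fintype.sum_prod_type]
  exact Finset.sum_congr rfl fun i _ => by rw [Finset.card_filter]; rfl

end blocks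

lemma symplForm_zero_right {m : ℕ} (P : PauliVec m) : symplForm P 0 = 0 := by
  rw [symplForm_comm]; exact symplForm_zero_left P

section cat
variable {n n₀ : ℕ}

def outQ (X Z : PauliVec n₀) (P : PauliVec (n * n₀)) : PauliVec n :=
  (fun i => symplForm (blk P i) Z, fun i => symplForm (blk P i) X)

@[simp] lemma outQ_add (X Z : PauliVec n₀) (P Q : PauliVec (n * n₀)) :
    outQ X Z (P + Q) = outQ X Z P + outQ X Z Q := by
  refine Prod.ext (funext fun i => ?_) (funext fun i => ?_) <;>
    simp [outQ, symplForm_add_left]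

@[simp] lemma outQ_smul (X Z : PauliVec n₀) (c : ZMod 2) (P : PauliVec (n * n₀)) :
    outQ X Z (c • P) = c • outQ X Z P := by
  refine Prod.ext (funext fun i => ?_) (funext fun i => ?_) <;>
    simp [outQ, symplForm_smul_left]

@[simp] lemma outQ_zero (X Z : PauliVec n₀) :
    outQ X Z (0 : PauliVec (n * n₀)) = 0 := by
  refine Prod.ext (funext fun i => ?_) (funext fun i => ?_) <;>
    simp [outQ, symplForm_zero_left]

def res (X Z : PauliVec n₀) (P : PauliVec (n * n₀)) (i : Fin n) : PauliVec n₀ :=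
  blk P i - (outQ X Z P).1 i • X - (outQ X Z P).2 i • Z

lemma blk_decomp (X Z : PauliVec n₀) (P : PauliVec (n * n₀)) (i : Fin n) :
    blk P i = res X Z P i + (outQ X Z P).1 i • X + (outQ X Z P).2 i • Z := by
  unfold res; abel

lemma res_add (X Z : PauliVec n₀) (P Q : PauliVec (n * n₀)) (i : Fin n) :
    res X Z (P + Q) i = res X Z P i + res X Z Q i := by
  unfold res
  rw [outQ_add, blk_add]
  simp only [Prod.fst_add, Prod.snd_add, Pi.add_apply, add_smul]
  abel

lemma res_smul (X Z : PauliVec n₀) (c : ZMod 2) (P : PauliVec (n * n₀)) (i : Fin n) :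
    res X Z (c • P) i = c • res X Z P i := by
  unfold res
  rw [outQ_smul, blk_smul]
  simp only [Prod.smul_fst, Prod.smul_snd, Pi.smul_apply, smul_eq_mul, mul_smul, smul_sub]

lemma res_zero (X Z : PauliVec n₀) (i : Fin n) :
    res X Z (0 : PauliVec (n * n₀)) i = 0 := by
  unfold res
  rw [outQ_zero, blk_zero]
  simp

def catS (Sout : Submodule (ZMod 2) (PauliVec n)) (Sin : Submodule (ZMod 2) (PauliVec n₀))
    (X Z : PauliVec n₀) : Submodule (ZMod 2) (PauliVec (n * n₀)) where
  carrier := {P | outQ X Z P ∈ Sout ∧ ∀ i, res X Z P i ∈ Sin}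
  zero_mem' := by
    refine ⟨?_, fun i => ?_⟩
    · rw [outQ_zero]; exact Sout.zero_mem
    · rw [res_zero]; exact Sin.zero_mem
  add_mem' := by
    rintro P Q ⟨hP1, hP2⟩ ⟨hQ1, hQ2⟩
    refine ⟨?_, fun i => ?_⟩
    · rw [outQ_add]; exact Sout.add_mem hP1 hQ1
    · rw [res_add]; exact Sin.add_mem (hP2 i) (hQ2 i)
  smul_mem' := by
    rintro c P ⟨hP1, hP2⟩
    refine ⟨?_, fun i => ?_⟩
    · rw [outQ_smul]; exact Sout.smul_mem c hP1
    · rw [res_smul]; exact Sin.smul_mem c (hP2 i)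

lemma mem_catS {Sout : Submodule (ZMod 2) (PauliVec n)} {Sin : Submodule (ZMod 2) (PauliVec n₀)}
    {X Z : PauliVec n₀} {P : PauliVec (n * n₀)} :
    P ∈ catS Sout Sin X Z ↔ outQ X Z P ∈ Sout ∧ ∀ i, res X Z P i ∈ Sin := Iff.rfl

def Psi (Sout : Submodule (ZMod 2) (PauliVec n)) (Sin : Submodule (ZMod 2) (PauliVec n₀))
    (X Z : PauliVec n₀) : ((Fin n → Sin) × Sout) →ₗ[ZMod 2] PauliVec (n * n₀) where
  toFun ft := unblk (fun i =>
    (ft.1 i : PauliVec n₀) + (ft.2 : PauliVec n).1 i • X + (ft.2 : PauliVec n).2 i • Z)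
  map_add' a b := by
    refine Prod.ext (funext fun m => ?_) (funext fun m => ?_) <;>
    · show _ = _
      simp only [unblk, Submodule.coe_add, Pi.add_apply, Prod.fst_add, Prod.snd_add, add_smul,
        Prod.fst_add, Pi.add_apply]
      ring
  map_smul' c a := by
    refine Prod.ext (funext fun m => ?_) (funext fun m => ?_) <;>
    · show _ = _
      simp only [unblk, Submodule.coe_smul, Pi.smul_apply, Prod.smul_fst, Prod.smul_snd,
        smul_eq_mul, mul_smul, RingHom.id_apply, smul_add, Prod.fst_add, Prod.snd_add,
        Pi.add_apply]
      ring

lemma blk_Psi (Sout : Submodule (ZMod 2) (PauliVec n)) (Sin : Submodule (ZMod 2) (PauliVec n₀))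
    (X Z : PauliVec n₀) (ft : (Fin n → Sin) × Sout) (i : Fin n) :
    blk (Psi Sout Sin X Z ft) i =
      (ft.1 i : PauliVec n₀) + (ft.2 : PauliVec n).1 i • X + (ft.2 : PauliVec n).2 i • Z :=
  blk_unblk (fun j => (ft.1 j : PauliVec n₀) + (ft.2 : PauliVec n).1 j • X
    + (ft.2 : PauliVec n).2 j • Z) i

end cat

/-- Concatenating an outer `[[n, k, d]]` stabilizer code with an inner
`[[n₀, 1, d₀]]` stabilizer code (replacing each of the `n` outer qubits by a block of the
inner code) yields an `[[N, K, D]]` code with `N = n·n₀`, `K = k` and distance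
`D ≥ d·d₀`. -/
theorem stmt_10 (n k d n₀ d₀ : ℕ) (hk : k ≤ n) (hn₀ : 1 ≤ n₀)
    (Qout : StabCode n k d) (Qin : StabCode n₀ 1 d₀) :
    Nonempty (StabCode (n * n₀) k (d * d₀)) := by
  classical
  obtain ⟨X, Z, hX, hZ, hXZ, hres⟩ := exists_logical_pair hn₀ Qin
  have hZX : symplForm Z X = 1 := by rw [symplForm_comm]; exact hXZ
  set Sc := catS Qout.S Qin.S X Z with hSc
  set Ψ := Psi Qout.S Qin.S X Z with hΨ
  -- basic pairing computations
  have hpairZ : ∀ s ∈ Qin.S, ∀ a b : ZMod 2, symplForm (s + a • X + b • Z) Z = a := by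
    intro s hs a b
    rw [symplForm_add_left, symplForm_add_left, symplForm_smul_left, symplForm_smul_left,
      hZ s hs, symplForm_self, hXZ]
    ring
  have hpairX : ∀ s ∈ Qin.S, ∀ a b : ZMod 2, symplForm (s + a • X + b • Z) X = b := by
    intro s hs a b
    rw [symplForm_add_left, symplForm_add_left, symplForm_smul_left, symplForm_smul_left,
      hX s hs, symplForm_self, hZX]
    ring
  -- outQ and res on the image of Ψ
  have houtPsi : ∀ ft : (Fin n → Qin.S) × Qout.S,
      outQ X Z (Ψ ft) = (ft.2 : PauliVec n) := by
    intro ft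
    refine Prod.ext (funext fun i => ?_) (funext fun i => ?_)
    · show symplForm (blk (Ψ ft) i) Z = _
      rw [blk_Psi]
      exact hpairZ _ (ft.1 i).2 _ _
    · show symplForm (blk (Ψ ft) i) X = _
      rw [blk_Psi]
      exact hpairX _ (ft.1 i).2 _ _
  have hresPsi : ∀ (ft : (Fin n → Qin.S) × Qout.S) (i : Fin n),
      res X Z (Ψ ft) i = (ft.1 i : PauliVec n₀) := by
    intro ft i
    unfold res
    rw [houtPsi, blk_Psi]
    abel
  -- range of Ψ is Sc
  have hrange : LinearMap.range Ψ = Sc := by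
    apply le_antisymm
    · rintro _ ⟨ft, rfl⟩
      refine ⟨?_, fun i => ?_⟩
      · rw [houtPsi]; exact ft.2.2
      · rw [hresPsi]; exact (ft.1 i).2
    · intro P hP
      refine ⟨(fun i => ⟨res X Z P i, hP.2 i⟩, ⟨outQ X Z P, hP.1⟩), ?_⟩
      show unblk (fun i => res X Z P i + (outQ X Z P).1 i • X + (outQ X Z P).2 i • Z) = P
      rw [show (fun i => res X Z P i + (outQ X Z P).1 i • X + (outQ X Z P).2 i • Z) = blk P
        from funext fun i => (blk_decomp X Z P i).symm]
      exact unblk_blk P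
  -- Ψ is injective
  have hinj : Function.Injective Ψ := by
    intro u v huv
    have h2 : (u.2 : PauliVec n) = (v.2 : PauliVec n) := by
      rw [← houtPsi u, ← houtPsi v, huv]
    have h1 : ∀ i, (u.1 i : PauliVec n₀) = (v.1 i : PauliVec n₀) := by
      intro i
      rw [← hresPsi u i, ← hresPsi v i, huv]
    exact Prod.ext (funext fun i => Subtype.ext (h1 i)) (Subtype.ext h2)
  refine ⟨⟨Sc, ?_, ?_, ?_⟩⟩
  · -- isotropic
    intro a ha b hb
    have hpairfull : ∀ s ∈ Qin.S, ∀ s' ∈ Qin.S, ∀ a₁ b₁ a₂ b₂ : ZMod 2,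
        symplForm (s + a₁ • X + b₁ • Z) (s' + a₂ • X + b₂ • Z) = a₁ * b₂ + b₁ * a₂ := by
      intro s hs s' hs' a₁ b₁ a₂ b₂
      have hXs' : symplForm X s' = 0 := by rw [symplForm_comm]; exact hX s' hs'
      have hZs' : symplForm Z s' = 0 := by rw [symplForm_comm]; exact hZ s' hs'
      simp only [symplForm_add_left, symplForm_add_right, symplForm_smul_left,
        symplForm_smul_right]
      rw [symplForm_self X, symplForm_self Z, hXZ, hZX, Qin.isotropic s hs s' hs',
        hX s hs, hZ s hs, hXs', hZs']
      ring
    rw [symplForm_blocks]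
    have hterm : ∀ i, symplForm (blk a i) (blk b i) =
        (outQ X Z a).1 i * (outQ X Z b).2 i + (outQ X Z a).2 i * (outQ X Z b).1 i := by
      intro i
      rw [blk_decomp X Z a i, blk_decomp X Z b i]
      exact hpairfull _ (ha.2 i) _ (hb.2 i) _ _ _ _
    rw [Finset.sum_congr rfl fun i _ => hterm i]
    exact Qout.isotropic _ ha.1 _ hb.1
  · -- rank
    have hD : Module.finrank (ZMod 2) ((Fin n → Qin.S) × Qout.S)
        = n * (n₀ - 1) + (n - k) := by
      rw [Module.finrank_prod, Module.finrank_pi_fintype, Qout.rank_eq]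
      congr 1
      rw [Finset.sum_congr rfl fun i _ => Qin.rank_eq, Finset.sum_const, Finset.card_univ,
        Fintype.card_fin, smul_eq_mul]
    have heq : Module.finrank (ZMod 2) Sc = n * (n₀ - 1) + (n - k) := by
      rw [← hrange, LinearMap.finrank_range_of_inj hinj, hD]
    rw [heq]
    have h1 : n * (n₀ - 1) + n = n * n₀ := by
      cases n₀ with
      | zero => omega
      | succ m => simp only [Nat.add_sub_cancel]; ring
    omega
  · -- distance
    intro P hcomm hnot
    -- each block commutes with the inner stabilizer
    have hblkC : ∀ i, ∀ s ∈ Qin.S, symplForm (blk P i) s = 0 := by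
      intro i s hs
      set E : PauliVec (n * n₀) := unblk (fun j => if j = i then s else 0) with hE
      have hEblk : ∀ j, blk E j = if j = i then s else 0 := fun j => blk_unblk _ j
      have hEout : outQ X Z E = 0 := by
        refine Prod.ext (funext fun j => ?_) (funext fun j => ?_)
        · show symplForm (blk E j) Z = 0
          rw [hEblk]
          by_cases hji : j = i
          · rw [if_pos hji]; exact hZ s hs
          · rw [if_neg hji]; exact symplForm_zero_left Z
        · show symplForm (blk E j) X = 0
          rw [hEblk]
          by_cases hji : j = i
          · rw [if_pos hji]; exact hX s hs
          · rw [if_neg hji]; exact symplForm_zero_left X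
      have hEmem : E ∈ Sc := by
        refine ⟨by rw [hEout]; exact Qout.S.zero_mem, fun j => ?_⟩
        unfold res
        rw [hEout]
        simp only [Prod.fst_zero, Prod.snd_zero, Pi.zero_apply, zero_smul, sub_zero]
        rw [hEblk]
        by_cases hji : j = i
        · rw [if_pos hji]; exact hs
        · rw [if_neg hji]; exact Qin.S.zero_mem
      have h0 := hcomm E hEmem
      rw [symplForm_blocks] at h0
      rw [Finset.sum_congr rfl (fun j _ => by rw [hEblk j])] at h0
      rw [Finset.sum_congr rfl (fun j _ => ?_), Finset.sum_ite_eq' univ i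
        (fun j => symplForm (blk P j) s)] at h0
      · simpa using h0
      · show symplForm (blk P j) (if j = i then s else 0)
          = if j = i then symplForm (blk P j) s else 0
        by_cases hji : j = i
        · rw [if_pos hji, if_pos hji]
        · rw [if_neg hji, if_neg hji]; exact symplForm_zero_right _
    -- residues lie in the inner stabilizer
    have hresS : ∀ i, res X Z P i ∈ Qin.S := by
      intro i
      apply hres
      · intro s hs
        unfold res
        rw [symplForm_comm, symplForm_sub_left, symplForm_sub_left, symplForm_smul_left,
          symplForm_smul_left, hblkC i s hs, symplForm_comm X s, hX s hs,
          symplForm_comm Z s, hZ s hs]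
        ring
      · unfold res
        rw [symplForm_sub_left, symplForm_sub_left, symplForm_smul_left, symplForm_smul_left,
          symplForm_self, hZX, show (outQ X Z P).2 i = symplForm (blk P i) X from rfl]
        ring
      · unfold res
        rw [symplForm_sub_left, symplForm_sub_left, symplForm_smul_left, symplForm_smul_left,
          symplForm_self, hXZ, show (outQ X Z P).1 i = symplForm (blk P i) Z from rfl]
        ring
    -- the induced outer operator commutes with the outer stabilizer
    have hQperp : ∀ t ∈ Qout.S, symplForm (outQ X Z P) t = 0 := by
      intro t ht
      have hmem : Ψ (0, ⟨t, ht⟩) ∈ Sc := by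
        rw [← hrange]; exact ⟨_, rfl⟩
      have h0 := hcomm _ hmem
      rw [symplForm_blocks] at h0
      have hterm : ∀ i, symplForm (blk P i) (blk (Ψ (0, ⟨t, ht⟩)) i)
          = t.1 i * symplForm (blk P i) X + t.2 i * symplForm (blk P i) Z := by
        intro i
        rw [hΨ, blk_Psi]
        simp only [Pi.zero_apply, ZeroMemClass.coe_zero, zero_add]
        rw [symplForm_add_right, symplForm_smul_right, symplForm_smul_right]
      rw [Finset.sum_congr rfl fun i _ => hterm i] at h0
      rw [← h0]
      refine Finset.sum_congr rfl fun i _ => ?_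
      simp only [outQ]
      ring
    -- the induced outer operator is a logical operator
    have hQnot : outQ X Z P ∉ Qout.S := by
      intro hQ
      exact hnot ⟨hQ, hresS⟩
    have hd : d ≤ pauliWeight (outQ X Z P) := Qout.dist _ hQperp hQnot
    -- blocks in the support of outQ carry weight at least d₀
    have hblk_w : ∀ i, ((outQ X Z P).1 i ≠ 0 ∨ (outQ X Z P).2 i ≠ 0) →
        d₀ ≤ pauliWeight (blk P i) := by
      intro i hi
      apply Qin.dist
      · intro s hs; exact hblkC i s hs
      · intro hmem
        have h1 : (outQ X Z P).1 i = 0 := hZ (blk P i) hmem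
        have h2 : (outQ X Z P).2 i = 0 := hX (blk P i) hmem
        rcases hi with hi | hi
        · exact hi h1
        · exact hi h2
    calc d * d₀ ≤ pauliWeight (outQ X Z P) * d₀ := Nat.mul_le_mul_right _ hd
      _ ≤ ∑ i ∈ (univ.filter fun i => (outQ X Z P).1 i ≠ 0 ∨ (outQ X Z P).2 i ≠ 0),
            pauliWeight (blk P i) := by
          rw [← smul_eq_mul]
          exact Finset.card_nsmul_le_sum _ _ _ fun i hi =>
            hblk_w i (Finset.mem_filter.mp hi).2
      _ ≤ ∑ i, pauliWeight (blk P i) :=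
          Finset.sum_le_sum_of_subset (Finset.filter_subset _ _)
      _ = pauliWeight P := (pauliWeight_blocks P).symm
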